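/- The coalgebraic characterisation of the guarded-string language of a KAT expression: G(x) contains the single atom α iff ε_α(x) = true, and G(x) contains α p u iff G(δ_{α,p}(x)) contains u. -/

import Mathlib

/-- Boolean expressions over primitive tests `T`. -/
inductive BExp (T : Type) : Type
  | var : T → BExp T
  | and : BExp T → BExp T → BExp T
  | or : BExp T → BExp T → BExp T
  | not : BExp T → BExp T
  | top : BExp T
  | bot : BExp T

/-- An atom assigns a Boolean value to each primitive test. -/
def Atom (T : Type) := T → Bool

/-- Satisfaction of a Boolean expression by an atom. -/
def BExp.sat {T : Type} (α : Atom T) : BExp T → Bool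
  | .var t => α t
  | .and a b => a.sat α && b.sat α
  | .or a b => a.sat α || b.sat α
  | .not a => !a.sat α
  | .top => true
  | .bot => false

/-- KAT expressions over letters `A` and primitive tests `T`. -/
inductive KATExp (T A : Type) : Type
  | letter : A → KATExp T A
  | test : BExp T → KATExp T A
  | zero : KATExp T A
  | one : KATExp T A
  | plus : KATExp T A → KATExp T A → KATExp T A
  | mul : KATExp T A → KATExp T A → KATExp T A
  | star : KATExp T A → KATExp T A

/-- Guarded strings: an atom followed by a list of (letter, atom) pairs. -/
def GS (T A : Type) := Atom T × List (A × Atom T)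

def GS.lastAtom {T A : Type} (u : GS T A) : Atom T :=
  (u.2.map Prod.snd).getLastD u.1

/-- Partial concatenation of guarded strings. -/
def GS.cat {T A : Type} [DecidableEq (Atom T)] (u v : GS T A) :
    Option (GS T A) :=
  if u.lastAtom = v.1 then some (u.1, u.2 ++ v.2) else none

def gsCat {T A : Type} [DecidableEq (Atom T)] (x y : Set (GS T A)) :
    Set (GS T A) :=
  {w | ∃ u ∈ x, ∃ v ∈ y, u.cat v = some w}

def gsPow {T A : Type} [DecidableEq (Atom T)] (x : Set (GS T A)) :
    ℕ → Set (GS T A)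
  | 0 => {u | u.2 = []}
  | n + 1 => gsCat x (gsPow x n)

/-- The guarded-string language interpretation of KAT expressions. -/
def gsLang {T A : Type} [DecidableEq (Atom T)] : KATExp T A → Set (GS T A)
  | .letter p => {u | ∃ α β, u = (α, [(p, β)])}
  | .test a => {u | u.2 = [] ∧ a.sat u.1 = true}
  | .zero => ∅
  | .one => {u | u.2 = []}
  | .plus x y => gsLang x ∪ gsLang y
  | .mul x y => gsCat (gsLang x) (gsLang y)
  | .star x => ⋃ n : ℕ, gsPow (gsLang x) n

/-- `ε_α(x)`: does `x` accept the single atom `α`? -/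
def eps {T A : Type} (α : Atom T) : KATExp T A → Bool
  | .letter _ => false
  | .test a => a.sat α
  | .zero => false
  | .one => true
  | .plus x y => eps α x || eps α y
  | .mul x y => eps α x && eps α y
  | .star _ => true

/-- The Brzozowski derivative `δ_{α,p}` of a KAT expression. -/
def katDeriv {T A : Type} [DecidableEq A] (α : Atom T) (p : A) :
    KATExp T A → KATExp T A
  | .letter q => if p = q then .one else .zero
  | .test _ => .zero
  | .zero => .zero
  | .one => .zero
  | .plus x y => .plus (katDeriv α p x) (katDeriv α p y)
  | .mul x y =>
      if eps α x then .plus (.mul (katDeriv α p x) y) (katDeriv α p y)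
      else .mul (katDeriv α p x) y
  | .star x => .mul (katDeriv α p x) (.star x)

lemma lastAtom_cons {T A : Type} (α β : Atom T) (p : A) (l : List (A × Atom T)) :
    GS.lastAtom ((α, (p, β) :: l) : GS T A) = GS.lastAtom ((β, l) : GS T A) := by
  show (((p, β) :: l).map Prod.snd).getLastD α = _
  rw [List.map_cons, List.getLastD_cons]
  rfl

lemma lastAtom_nil {T A : Type} (α : Atom T) :
    GS.lastAtom (((α, []) : GS T A)) = α := rfl

lemma mem_gsCat {T A : Type} [DecidableEq (Atom T)] {X Y : Set (GS T A)}
    {β : Atom T} {l : List (A × Atom T)} :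
    ((β, l) : GS T A) ∈ gsCat X Y ↔
      ∃ l1 l2, l = l1 ++ l2 ∧ ((β, l1) : GS T A) ∈ X ∧
        ((GS.lastAtom (β, l1), l2) : GS T A) ∈ Y := by
  constructor
  · rintro ⟨⟨γ, lu⟩, hu, ⟨δ, lv⟩, hv, hcat⟩
    unfold GS.cat at hcat
    split_ifs at hcat with h
    · obtain ⟨h1, h2⟩ := Prod.mk.injEq .. ▸ Option.some.inj hcat
      subst h1 h2
      refine ⟨lu, lv, rfl, hu, ?_⟩
      show (GS.lastAtom (γ, lu), lv) ∈ Y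
      rw [(h : GS.lastAtom (γ, lu) = δ)]
      exact hv
  · rintro ⟨l1, l2, rfl, h1, h2⟩
    exact ⟨(β, l1), h1, (GS.lastAtom (β, l1), l2), h2, by simp [GS.cat]⟩

lemma mem_gsCat_nil {T A : Type} [DecidableEq (Atom T)] {X Y : Set (GS T A)}
    {α : Atom T} :
    ((α, []) : GS T A) ∈ gsCat X Y ↔
      ((α, []) : GS T A) ∈ X ∧ ((α, []) : GS T A) ∈ Y := by
  rw [mem_gsCat]
  constructor
  · rintro ⟨l1, l2, h, h1, h2⟩
    obtain ⟨rfl, rfl⟩ := List.append_eq_nil_iff.mp h.symm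
    exact ⟨h1, by rwa [lastAtom_nil] at h2⟩
  · rintro ⟨h1, h2⟩
    exact ⟨[], [], rfl, h1, by rwa [lastAtom_nil]⟩

lemma mem_gsCat_cons {T A : Type} [DecidableEq (Atom T)] {X Y : Set (GS T A)}
    {α β : Atom T} {p : A} {l : List (A × Atom T)} :
    ((α, (p, β) :: l) : GS T A) ∈ gsCat X Y ↔
      (((α, []) : GS T A) ∈ X ∧ ((α, (p, β) :: l) : GS T A) ∈ Y) ∨
      (∃ l1 l2, l = l1 ++ l2 ∧ ((α, (p, β) :: l1) : GS T A) ∈ X ∧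
        ((GS.lastAtom (β, l1), l2) : GS T A) ∈ Y) := by
  rw [mem_gsCat]
  constructor
  · rintro ⟨l1, l2, h, h1, h2⟩
    rcases l1 with _ | ⟨⟨q, γ⟩, l1'⟩
    · obtain rfl : (p, β) :: l = l2 := h
      exact Or.inl ⟨h1, by rwa [lastAtom_nil] at h2⟩
    · obtain ⟨⟨rfl, rfl⟩, rfl⟩ : ((p, β) = (q, γ)) ∧ l = l1' ++ l2 := by
        simpa using h
      exact Or.inr ⟨l1', l2, rfl, h1, by rwa [lastAtom_cons] at h2⟩
  · rintro (⟨h1, h2⟩ | ⟨l1, l2, rfl, h1, h2⟩)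
    · exact ⟨[], (p, β) :: l, rfl, h1, by rwa [lastAtom_nil]⟩
    · exact ⟨(p, β) :: l1, l2, rfl, h1, by rwa [lastAtom_cons]⟩

/-- Coalgebraic characterisation of the guarded-string language of a KAT
expression: `G(x)` contains the single atom `α` iff `ε_α(x)`, and contains
`α p u` iff `G(δ_{α,p}(x))` contains `u`. -/
theorem gsLang_coalgebraic {T A : Type} [DecidableEq (Atom T)] [DecidableEq A]
    (x : KATExp T A) :
    (∀ α : Atom T, (α, ([] : List (A × Atom T))) ∈ gsLang x ↔ eps α x = true)
    ∧ (∀ (α : Atom T) (p : A) (u : GS T A),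
        ((α, (p, u.1) :: u.2) : GS T A) ∈ gsLang x ↔ u ∈ gsLang (katDeriv α p x)) := by
  induction x with
  | letter q =>
    refine ⟨fun α => ?_, fun α p u => ?_⟩
    · refine iff_of_false ?_ Bool.false_ne_true
      rintro ⟨a, b, h⟩
      exact List.cons_ne_nil _ _ (congrArg Prod.snd h).symm
    · rcases u with ⟨β, l⟩
      by_cases hpq : p = q
      · subst hpq
        show _ ∈ gsLang (KATExp.letter p) ↔ _ ∈ gsLang (if p = p then KATExp.one else .zero)
        rw [if_pos rfl]
        constructor
        · rintro ⟨a, b, h⟩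
          obtain ⟨-, h2⟩ := Prod.mk.injEq .. ▸ h
          exact (List.cons.injEq .. ▸ h2).2
        · intro h
          obtain rfl : l = [] := h
          exact ⟨α, β, rfl⟩
      · show _ ∈ gsLang (KATExp.letter q) ↔ _ ∈ gsLang (if p = q then KATExp.one else .zero)
        rw [if_neg hpq]
        refine iff_of_false ?_ (Set.notMem_empty _)
        rintro ⟨a, b, h⟩
        obtain ⟨-, h2⟩ := Prod.mk.injEq .. ▸ h
        exact hpq (congrArg Prod.fst (List.cons.injEq .. ▸ h2).1)
  | test a =>
    refine ⟨fun α => ⟨fun h => h.2, fun h => ⟨rfl, h⟩⟩, fun α p u => ?_⟩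
    exact iff_of_false (fun h => List.cons_ne_nil _ _ h.1) (Set.notMem_empty _)
  | zero =>
    exact ⟨fun α => iff_of_false (Set.notMem_empty _) Bool.false_ne_true,
      fun α p u => iff_of_false (Set.notMem_empty _) (Set.notMem_empty _)⟩
  | one =>
    exact ⟨fun α => iff_of_true rfl rfl,
      fun α p u => iff_of_false (fun h => List.cons_ne_nil _ _ h) (Set.notMem_empty _)⟩
  | plus x y ihx ihy =>
    constructor
    · intro α
      show _ ∈ gsLang x ∪ gsLang y ↔ (eps α x || eps α y) = true
      exact (Set.mem_union _ _ _).trans ((or_congr (ihx.1 α) (ihy.1 α)).trans (by rw [Bool.or_eq_true]))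
    · intro α p u
      show _ ∈ gsLang x ∪ gsLang y ↔ u ∈ gsLang (katDeriv α p x) ∪ gsLang (katDeriv α p y)
      exact (Set.mem_union _ _ _).trans ((or_congr (ihx.2 α p u) (ihy.2 α p u)).trans (Set.mem_union _ _ _).symm)
  | mul x y ihx ihy =>
    constructor
    · intro α
      show _ ∈ gsCat (gsLang x) (gsLang y) ↔ (eps α x && eps α y) = true
      exact mem_gsCat_nil.trans ((and_congr (ihx.1 α) (ihy.1 α)).trans (by rw [Bool.and_eq_true]))
    · intro α p u
      rcases u with ⟨β, l⟩
      show ((α, (p, β) :: l) : GS T A) ∈ gsCat (gsLang x) (gsLang y) ↔ _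
      rw [mem_gsCat_cons]
      simp only [katDeriv]
      by_cases hx : eps α x = true
      · simp only [hx, if_true]
        show _ ↔ ((β, l) : GS T A) ∈ gsCat (gsLang (katDeriv α p x)) (gsLang y) ∪ gsLang (katDeriv α p y)
        refine Iff.trans ?_ ((Set.mem_union _ _ _).trans (or_congr_left mem_gsCat)).symm
        constructor
        · rintro (⟨h1, h2⟩ | ⟨l1, l2, rfl, h1, h2⟩)
          · exact Or.inr ((ihy.2 α p (β, l)).mp h2)
          · exact Or.inl ⟨l1, l2, rfl, (ihx.2 α p (β, l1)).mp h1, h2⟩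
        · rintro (⟨l1, l2, rfl, h1, h2⟩ | h)
          · exact Or.inr ⟨l1, l2, rfl, (ihx.2 α p (β, l1)).mpr h1, h2⟩
          · exact Or.inl ⟨(ihx.1 α).mpr hx, (ihy.2 α p (β, l)).mpr h⟩
      · simp only [hx, if_false]
        show _ ↔ ((β, l) : GS T A) ∈ gsCat (gsLang (katDeriv α p x)) (gsLang y)
        refine Iff.trans ?_ mem_gsCat.symm
        constructor
        · rintro (⟨h1, h2⟩ | ⟨l1, l2, rfl, h1, h2⟩)
          · exact absurd ((ihx.1 α).mp h1) hx
          · exact ⟨l1, l2, rfl, (ihx.2 α p (β, l1)).mp h1, h2⟩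
        · rintro ⟨l1, l2, rfl, h1, h2⟩
          exact Or.inr ⟨l1, l2, rfl, (ihx.2 α p (β, l1)).mpr h1, h2⟩
  | star x ih =>
    constructor
    · intro α
      simp only [eps, iff_true]
      exact Set.mem_iUnion.mpr ⟨0, rfl⟩
    · intro α p u
      rcases u with ⟨β, l⟩
      show ((α, (p, β) :: l) : GS T A) ∈ ⋃ n, gsPow (gsLang x) n ↔
        ((β, l) : GS T A) ∈ gsCat (gsLang (katDeriv α p x)) (gsLang (.star x))
      constructor
      · intro h
        obtain ⟨n, h⟩ := Set.mem_iUnion.mp h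
        clear * - ih h
        induction n generalizing β l with
        | zero => exact absurd (h : (p, β) :: l = []) (List.cons_ne_nil _ _)
        | succ n ihn =>
          replace h := (mem_gsCat_cons (X := gsLang x) (Y := gsPow (gsLang x) n)).mp h
          rcases h with ⟨h1, h2⟩ | ⟨l1, l2, rfl, h1, h2⟩
          · exact ihn β l h2
          · exact mem_gsCat.mpr ⟨l1, l2, rfl, (ih.2 α p (β, l1)).mp h1,
              Set.mem_iUnion.mpr ⟨n, h2⟩⟩
      · intro h
        obtain ⟨l1, l2, rfl, h1, h2⟩ := mem_gsCat.mp h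
        obtain ⟨n, h2⟩ := Set.mem_iUnion.mp h2
        exact Set.mem_iUnion.mpr ⟨n + 1,
          mem_gsCat_cons.mpr (Or.inr ⟨l1, l2, rfl, (ih.2 α p (β, l1)).mpr h1, h2⟩)⟩
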